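/- arXiv:0907.1432 — 4 statements merged into one kernel-verified Lean document; each statement's English description precedes it below -/
import Mathlib

section
/- Let N be a (T+1)-layered linear deterministic network over 𝔽_p, and suppose a linear coding scheme (C_k, F_j, D_k) linearly solves N. Then the linear coding scheme for the reciprocal network N′ given by C′_k = D_k^T, D′_k = C_k^T, and F′_j = F_j^T linearly solves N′. In particular, if N is linearly solvable then so is its reciprocal N′. -/
open Matrix

/-!
A `(T+1)`-layered linear deterministic network over `𝔽_p = ZMod p`.
Layer `m` (for `0 ≤ m ≤ T`) has a finite set of vertices `V m`; the field `V` is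
indexed by all of `ℕ` for convenience, but only layers `0,…,T` play a role.
`G m i j` is the channel gain matrix on the edge from node `i` in layer `m`
to node `j` in layer `m+1` (it is the zero matrix when there is no edge);
only `m < T` is relevant.  There are `n` unicast messages; message `k` has
length `w k`, source node `src k` in layer `0` and destination node `dst k`
in layer `T`.
-/
structure LayeredNetwork (p q T n : ℕ) where
  V : ℕ → Type
  fintypeV : ∀ m, Fintype (V m)
  decEqV : ∀ m, DecidableEq (V m)
  G : (m : ℕ) → V m → V (m + 1) → Matrix (Fin q) (Fin q) (ZMod p)
  w : Fin n → ℕ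
  src : Fin n → V 0
  dst : Fin n → V T

attribute [instance] LayeredNetwork.fintypeV LayeredNetwork.decEqV

/-- A linear coding scheme: encoding matrices `C k` at the sources, relay
matrices `F m j` at the intermediate nodes (only layers `1,…,T-1` are relevant),
and decoding matrices `D k` at the destinations. -/
structure Scheme {p q T n : ℕ} (N : LayeredNetwork p q T n) where
  C : (k : Fin n) → Matrix (Fin q) (Fin (N.w k)) (ZMod p)
  F : (m : ℕ) → N.V m → Matrix (Fin q) (Fin q) (ZMod p)
  D : (k : Fin n) → Matrix (Fin (N.w k)) (Fin q) (ZMod p)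

variable {p q T n : ℕ} {N : LayeredNetwork p q T n}

/-- A tuple of messages `W k ∈ 𝔽_p^{w k}`. -/
def Msg (N : LayeredNetwork p q T n) : Type :=
  (k : Fin n) → Fin (N.w k) → ZMod p

/-- The signal transmitted by each node: a source node `j` (layer `0`) sends
`x_j = ∑_{k : src k = j} C_k W_k`; a node `j` in layer `m+1` sends
`x_j = F_j y_j` where `y_j = ∑_i G_{ij} x_i` is its received signal. -/
def xSig (S : Scheme N) (W : Msg N) : (m : ℕ) → N.V m → (Fin q → ZMod p)
  | 0, j => ∑ k : Fin n, if N.src k = j then (S.C k).mulVec (W k) else 0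
  | m + 1, j => (S.F (m + 1) j).mulVec (∑ i : N.V m, (N.G m i j).mulVec (xSig S W m i))

/-- The signal received by a node `j` in layer `m ≥ 1`: `y_j = ∑_i G_{ij} x_i`. -/
def ySig (S : Scheme N) (W : Msg N) : (m : ℕ) → N.V m → (Fin q → ZMod p)
  | 0, _ => 0
  | m + 1, j => ∑ i : N.V m, (N.G m i j).mulVec (xSig S W m i)

/-- The reconstructed message `Ŵ_k = D_k y_{dst k}` at the destination of message `k`. -/
def decode (S : Scheme N) (W : Msg N) (k : Fin n) : Fin (N.w k) → ZMod p :=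
  (S.D k).mulVec (ySig S W T (N.dst k))

/-- The scheme linearly solves the network: `Ŵ_k = W_k` for every choice of messages. -/
def Solves (N : LayeredNetwork p q T n) (S : Scheme N) : Prop :=
  ∀ (W : Msg N) (k : Fin n), decode S W k = W k

/-- The network is linearly solvable: some linear coding scheme solves it. -/
def LinearlySolvable (N : LayeredNetwork p q T n) : Prop :=
  ∃ S : Scheme N, Solves N S

/-- The reciprocal network: the layers in reversed order (layer `m` of the
reciprocal is layer `T - m` of `N`), the channel gain matrix on each reversed
edge is the transpose of the original one, and for every message the roles of
the source and the destination are swapped. -/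
def LayeredNetwork.reciprocal (N : LayeredNetwork p q T n) : LayeredNetwork p q T n where
  V := fun m => N.V (T - m)
  fintypeV := fun m => N.fintypeV (T - m)
  decEqV := fun m => N.decEqV (T - m)
  G := fun m j i =>
    if h : m < T then
      (N.G (T - m - 1) i (cast (congrArg N.V (by omega : T - m = T - m - 1 + 1)) j))ᵀ
    else 0
  w := N.w
  src := N.dst
  dst := fun k => cast (congrArg N.V (by omega : (0 : ℕ) = T - T)) (N.src k)

/-- The reciprocal linear coding scheme: `C′_k = D_kᵀ`, `F′_j = F_jᵀ`
(the node `j` in layer `m` of the reciprocal network is the node `j` in layer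
`T - m` of `N`), and `D′_k = C_kᵀ`. -/
def Scheme.reciprocal (S : Scheme N) : Scheme N.reciprocal where
  C := fun k => (S.D k)ᵀ
  F := fun m j => (S.F (T - m) j)ᵀ
  D := fun k => (S.C k)ᵀ


section Aux

/-- Transport a one-vertex-argument function along an equality of layer indices. -/
lemma tr1 {α : Sort*} (f : ∀ m, N.V m → α) {a b : ℕ} (h : a = b) (j : N.V a) :
    f a j = f b (cast (congrArg N.V h) j) := by subst h; rfl

/-- Transport a two-vertex-argument function along an equality of layer indices. -/
lemma tr2 {α : Sort*} (g : ∀ m, N.V m → N.V (m + 1) → α) {a b : ℕ} (h : a = b)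
    (x : N.V a) (y : N.V (a + 1)) :
    g a x y = g b (cast (congrArg N.V h) x)
      (cast (congrArg N.V (by rw [h])) y) := by subst h; rfl

lemma cast_trans {a b c : ℕ} (h3 : a = c) {h1 : a = b} {h2 : b = c} (x : N.V a) :
    cast (congrArg N.V h2) (cast (congrArg N.V h1) x) = cast (congrArg N.V h3) x := by
  subst h1; subst h2; rfl

lemma mulVec_sumv {α β ι : Type*} [Fintype β] (s : Finset ι)
    (A : Matrix α β (ZMod p)) (v : ι → β → ZMod p) :
    A.mulVec (∑ i ∈ s, v i) = ∑ i ∈ s, A.mulVec (v i) :=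
  map_sum A.mulVecLin v s

lemma sum_mulVecv {α β ι : Type*} [Fintype β] (s : Finset ι)
    (A : ι → Matrix α β (ZMod p)) (v : β → ZMod p) :
    (∑ i ∈ s, A i).mulVec v = ∑ i ∈ s, (A i).mulVec v := by
  ext j
  simp only [Matrix.mulVec, dotProduct, Matrix.sum_apply, Finset.sum_apply,
    Finset.sum_mul]
  rw [Finset.sum_comm]

lemma mulVec_itev {α β : Type*} [Fintype β] (A : Matrix α β (ZMod p)) (c : Prop)
    [Decidable c] (v : β → ZMod p) :
    A.mulVec (if c then v else 0) = if c then A.mulVec v else 0 := by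
  split <;> simp

/-- Transfer matrix from the sources (layer `0`) to the transmitted signal of a node. -/
def xT (S : Scheme N) : (m : ℕ) → N.V m → N.V 0 → Matrix (Fin q) (Fin q) (ZMod p)
  | 0, j, i0 => if i0 = j then 1 else 0
  | m + 1, j, i0 => S.F (m + 1) j * ∑ i : N.V m, N.G m i j * xT S m i i0

/-- Transfer matrix from the sources (layer `0`) to the received signal of a node. -/
def yT (S : Scheme N) : (m : ℕ) → N.V m → N.V 0 → Matrix (Fin q) (Fin q) (ZMod p)
  | 0, _, _ => 0
  | m + 1, j, i0 => ∑ i : N.V m, N.G m i j * xT S m i i0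

lemma xT_succ (S : Scheme N) {a : ℕ} (ha : 1 ≤ a) (j : N.V a) (s : N.V 0) :
    xT S a j s = S.F a j * yT S a j s := by
  obtain ⟨e, rfl⟩ : ∃ e, a = e + 1 := ⟨a - 1, by omega⟩
  rfl

lemma xSig_eq (S : Scheme N) (W : Msg N) :
    ∀ (m : ℕ) (j : N.V m),
      xSig S W m j = ∑ i0 : N.V 0, (xT S m j i0).mulVec (xSig S W 0 i0) := by
  intro m
  induction m with
  | zero =>
    intro j
    have h : ∀ i0 : N.V 0, (xT S 0 j i0).mulVec (xSig S W 0 i0)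
        = if i0 = j then xSig S W 0 i0 else 0 := by
      intro i0
      show (if i0 = j then (1 : Matrix (Fin q) (Fin q) (ZMod p)) else 0).mulVec _ = _
      split <;> simp
    simp only [h]
    rw [Finset.sum_ite_eq' Finset.univ j (fun i0 => xSig S W 0 i0),
      if_pos (Finset.mem_univ _)]
  | succ m ih =>
    intro j
    show (S.F (m + 1) j).mulVec (∑ i : N.V m, (N.G m i j).mulVec (xSig S W m i))
      = ∑ i0 : N.V 0, (S.F (m + 1) j * ∑ i : N.V m, N.G m i j * xT S m i i0).mulVec
          (xSig S W 0 i0)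
    simp only [ih, mulVec_sumv, Matrix.mulVec_mulVec, Finset.mul_sum, sum_mulVecv]
    exact Finset.sum_comm

lemma ySig_eq (S : Scheme N) (W : Msg N) (m : ℕ) (j : N.V m) :
    ySig S W m j = ∑ i0 : N.V 0, (yT S m j i0).mulVec (xSig S W 0 i0) := by
  cases m with
  | zero => simp [ySig, yT]
  | succ m =>
    show (∑ i : N.V m, (N.G m i j).mulVec (xSig S W m i))
      = ∑ i0 : N.V 0, (∑ i : N.V m, N.G m i j * xT S m i i0).mulVec (xSig S W 0 i0)
    simp only [xSig_eq S W m, mulVec_sumv, Matrix.mulVec_mulVec, sum_mulVecv]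
    exact Finset.sum_comm

/-- The end-to-end transfer matrix from message `l` to decoder `k`. -/
def Mmat (S : Scheme N) (k l : Fin n) : Matrix (Fin (N.w k)) (Fin (N.w l)) (ZMod p) :=
  S.D k * yT S T (N.dst k) (N.src l) * S.C l

lemma decode_eq (S : Scheme N) (W : Msg N) (k : Fin n) :
    decode S W k = ∑ l : Fin n, (Mmat S k l).mulVec (W l) := by
  unfold decode
  rw [ySig_eq, mulVec_sumv]
  have hx0 : ∀ i0 : N.V 0, xSig S W 0 i0
      = ∑ l : Fin n, if N.src l = i0 then (S.C l).mulVec (W l) else 0 := fun _ => rfl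
  simp only [hx0, mulVec_sumv, mulVec_itev]
  rw [Finset.sum_comm]
  refine Finset.sum_congr rfl (fun l _ => ?_)
  rw [Finset.sum_ite_eq Finset.univ (N.src l)
    (fun i0 => (S.D k).mulVec ((yT S T (N.dst k) i0).mulVec ((S.C l).mulVec (W l)))),
    if_pos (Finset.mem_univ _)]
  simp [Mmat, Matrix.mulVec_mulVec, Matrix.mul_assoc]

lemma solves_iff (S : Scheme N) :
    Solves N S ↔ (∀ k, Mmat S k k = 1) ∧ (∀ k l, k ≠ l → Mmat S k l = 0) := by
  constructor
  · intro h
    have key : ∀ (k l : Fin n) (c : Fin (N.w l)),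
        (Mmat S k l).mulVec (Pi.single c 1)
          = (if hkl : l = k then (hkl ▸ Pi.single c 1 : Fin (N.w k) → ZMod p) else 0) := by
      intro k l c
      classical
      set W : Msg N := fun l' => if h' : l = l' then
        (h' ▸ (Pi.single c 1 : Fin (N.w l) → ZMod p)) else 0 with hW
      have hd := h W k
      rw [decode_eq] at hd
      rw [Finset.sum_eq_single l (fun l' _ hne => by
            simp only [hW, dif_neg (fun hh : l = l' => hne (hh ▸ rfl))]
            exact Matrix.mulVec_zero _)
          (fun hl => absurd (Finset.mem_univ l) hl)] at hd
      simpa [hW] using hd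
    constructor
    · intro k
      ext r c
      have := congrFun (key k k c) r
      simp only [dif_pos rfl] at this
      simpa [Matrix.mulVec_single, Pi.single_apply, Matrix.one_apply, eq_comm] using this
    · intro k l hkl
      ext r c
      have := congrFun (key k l c) r
      rw [dif_neg (fun hh => hkl hh.symm)] at this
      simpa [Matrix.mulVec_single] using this
  · rintro ⟨h1, h2⟩ W k
    rw [decode_eq]
    rw [Finset.sum_eq_single k (fun l _ hne => by
          rw [h2 k l (fun hh => hne hh.symm)]; exact Matrix.zero_mulVec _)
        (fun hk => absurd (Finset.mem_univ k) hk)]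
    rw [h1 k, Matrix.one_mulVec]

/-- The reversed partial transfer matrix: `Rmat m j d` is, up to transposition, the
transfer matrix of the first `m` layers of the reciprocal network. -/
def Rmat (S : Scheme N) : (m : ℕ) → N.V (T - m) → N.V T → Matrix (Fin q) (Fin q) (ZMod p)
  | 0, j, d => if d = j then 1 else 0
  | m + 1, j, d =>
    if h : m < T then
      (∑ i : N.V (T - m),
        Rmat S m i d * N.G (T - (m + 1)) j
          (cast (congrArg N.V (by omega : T - m = T - (m + 1) + 1)) i))
        * S.F (T - (m + 1)) j
    else 0

lemma xT_reciprocal (S : Scheme N) :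
    ∀ (m : ℕ), m ≤ T → ∀ (j : N.V (T - m)) (d : N.V (T - 0)),
      xT S.reciprocal m j d = (Rmat S m j d)ᵀ := by
  intro m
  induction m with
  | zero =>
    intro _ j d
    show (if d = j then (1 : Matrix (Fin q) (Fin q) (ZMod p)) else 0)
      = (if d = j then (1 : Matrix (Fin q) (Fin q) (ZMod p)) else 0)ᵀ
    split <;> simp
  | succ m ih =>
    intro hm j d
    have hmT : m < T := by omega
    have ih' := ih (by omega)
    show S.reciprocal.F (m + 1) j *
        (∑ i : N.reciprocal.V m, N.reciprocal.G m i j * xT S.reciprocal m i d)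
      = (Rmat S (m + 1) j d)ᵀ
    have ih'' : ∀ i : N.reciprocal.V m, xT S.reciprocal m i d = (Rmat S m i d)ᵀ :=
      fun i => ih' i d
    simp only [ih'']
    have hR : Rmat S (m + 1) j d = (∑ i : N.V (T - m),
        Rmat S m i d * N.G (T - (m + 1)) j
          (cast (congrArg N.V (by omega : T - m = T - (m + 1) + 1)) i))
        * S.F (T - (m + 1)) j := by
      show dite (m < T) _ _ = _
      rw [dif_pos hmT]
    rw [hR, Matrix.transpose_mul, Matrix.transpose_sum]
    congr 1
    refine Finset.sum_congr rfl (fun i _ => ?_)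
    rw [Matrix.transpose_mul]
    congr 1
    show dite (m < T) _ _ = _
    rw [dif_pos hmT]
    rfl

lemma yT_Rmat (S : Scheme N) (hT : 1 ≤ T) :
    ∀ (m : ℕ), m ≤ T - 1 → ∀ (d : N.V T) (s : N.V 0),
      yT S T d s = ∑ j : N.V (T - m), Rmat S m j d * yT S (T - m) j s := by
  intro m
  induction m with
  | zero =>
    intro _ d s
    have h : ∀ j : N.V (T - 0), Rmat S 0 j d * yT S (T - 0) j s
        = if d = j then yT S (T - 0) j s else 0 := by
      intro j
      show (if d = j then (1 : Matrix (Fin q) (Fin q) (ZMod p)) else 0) * _ = _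
      split <;> simp
    simp only [h]
    symm
    refine (Finset.sum_eq_single_of_mem d (Finset.mem_univ d)
      (fun j _ hne => if_neg (fun hh => hne hh.symm))).trans (if_pos rfl)
  | succ m ih =>
    intro hm d s
    have hmT : m < T := by omega
    have h2 : 1 ≤ T - (m + 1) := by omega
    have h1 : T - m = T - (m + 1) + 1 := by omega
    rw [ih (by omega) d s]
    have hR : ∀ j : N.V (T - (m + 1)), Rmat S (m + 1) j d = (∑ i : N.V (T - m),
        Rmat S m i d * N.G (T - (m + 1)) j
          (cast (congrArg N.V (by omega : T - m = T - (m + 1) + 1)) i))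
        * S.F (T - (m + 1)) j := by
      intro j
      show dite (m < T) _ _ = _
      rw [dif_pos hmT]
    have hstep : ∀ (j : N.V (T - (m + 1))), Rmat S (m + 1) j d * yT S (T - (m + 1)) j s
        = ∑ i : N.V (T - m), Rmat S m i d *
            (N.G (T - (m + 1)) j
              (cast (congrArg N.V (by omega : T - m = T - (m + 1) + 1)) i)
              * xT S (T - (m + 1)) j s) := by
      intro j
      rw [hR j, mul_assoc, ← xT_succ S h2 j s, Finset.sum_mul]
      exact Finset.sum_congr rfl (fun i _ => mul_assoc _ _ _)
    simp only [hstep]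
    rw [Finset.sum_comm]
    refine Finset.sum_congr rfl (fun i _ => ?_)
    rw [← Finset.mul_sum]
    congr 1
    exact tr1 (fun m' j' => yT S m' j' s) h1 i

lemma yT_reciprocal (S : Scheme N) (hT : 1 ≤ T) (k l : Fin n) :
    yT S.reciprocal T (N.reciprocal.dst k) (N.reciprocal.src l)
      = (yT S T (N.dst l) (N.src k))ᵀ := by
  have hT1 : T = (T - 1) + 1 := by omega
  refine Eq.trans (tr1 (N := N.reciprocal)
    (fun m' j' => yT S.reciprocal m' j' (N.reciprocal.src l)) hT1 (N.reciprocal.dst k)) ?_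
  show (∑ i : N.reciprocal.V (T - 1), N.reciprocal.G (T - 1) i
      (cast (congrArg N.reciprocal.V hT1) (N.reciprocal.dst k))
      * xT S.reciprocal (T - 1) i (N.reciprocal.src l))
    = (yT S T (N.dst l) (N.src k))ᵀ
  have hx : ∀ i : N.reciprocal.V (T - 1),
      xT S.reciprocal (T - 1) i (N.reciprocal.src l)
      = (Rmat S (T - 1) i (N.reciprocal.src l))ᵀ :=
    fun i => xT_reciprocal S (T - 1) (by omega) i (N.reciprocal.src l)
  simp only [hx]
  have hG : ∀ i : N.reciprocal.V (T - 1),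
      N.reciprocal.G (T - 1) i (cast (congrArg N.reciprocal.V hT1) (N.reciprocal.dst k))
      = (N.G (T - (T - 1) - 1)
          (cast (congrArg N.reciprocal.V hT1) (N.reciprocal.dst k))
          (cast (congrArg N.V (by omega : T - (T - 1) = T - (T - 1) - 1 + 1)) i))ᵀ := by
    intro i
    show dite (T - 1 < T) _ _ = _
    rw [dif_pos (by omega : T - 1 < T)]
    rfl
  simp only [hG, ← Matrix.transpose_mul]
  rw [← Matrix.transpose_sum]
  rw [yT_Rmat S hT (T - 1) (le_refl _) (N.dst l) (N.src k)]
  refine congrArg Matrix.transpose (Finset.sum_congr rfl (fun i _ => ?_))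
  have h01 : T - (T - 1) = 0 + 1 := by omega
  have hy : yT S (T - (T - 1)) i (N.src k)
      = N.G 0 (N.src k) (cast (congrArg N.V h01) i) := by
    refine Eq.trans (tr1 (fun m' j' => yT S m' j' (N.src k)) h01 i) ?_
    show (∑ i' : N.V 0, N.G 0 i' (cast (congrArg N.V h01) i) * xT S 0 i' (N.src k)) = _
    have h : ∀ i' : N.V 0, N.G 0 i' (cast (congrArg N.V h01) i) * xT S 0 i' (N.src k)
        = if N.src k = i' then N.G 0 i' (cast (congrArg N.V h01) i) else 0 := by
      intro i'
      show N.G 0 i' _ * (if N.src k = i' then (1 : Matrix (Fin q) (Fin q) (ZMod p)) else 0)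
        = _
      split <;> simp
    simp only [h]
    rw [Finset.sum_ite_eq Finset.univ (N.src k)
      (fun i' => N.G 0 i' (cast (congrArg N.V h01) i)), if_pos (Finset.mem_univ _)]
  rw [hy]
  congr 1
  refine (tr2 N.G (show T - (T - 1) - 1 = 0 by omega) _ _).trans ?_
  rw [show N.reciprocal.dst k
      = cast (congrArg N.V (by omega : (0 : ℕ) = T - T)) (N.src k) from rfl]
  exact congrArg₂ (N.G 0)
    (eq_of_heq (((cast_heq _ _).trans (cast_heq _ _)).trans (cast_heq _ _)))
    (eq_of_heq (((cast_heq _ _).trans (cast_heq _ _)).trans (cast_heq _ _).symm))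

lemma Mmat_reciprocal (S : Scheme N) (hT : 1 ≤ T) (k l : Fin n) :
    Mmat S.reciprocal k l = (Mmat S l k)ᵀ := by
  show (S.C k)ᵀ * yT S.reciprocal T (N.reciprocal.dst k) (N.reciprocal.src l) * (S.D l)ᵀ = _
  rw [yT_reciprocal S hT k l]
  rw [show Mmat S l k = S.D l * yT S T (N.dst l) (N.src k) * S.C k from rfl]
  rw [Matrix.transpose_mul, Matrix.transpose_mul, Matrix.mul_assoc]

end Aux

/-- **Linear reciprocity of layered linear deterministic networks.**
If a linear coding scheme `(C_k, F_j, D_k)` linearly solves the `(T+1)`-layered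
linear deterministic network `N`, then the scheme `C′_k = D_kᵀ, D′_k = C_kᵀ,
F′_j = F_jᵀ` linearly solves the reciprocal network `N′`.  In particular, if
`N` is linearly solvable then so is its reciprocal. -/
theorem layered_linear_reciprocity [Fact p.Prime]
    (hq : 1 ≤ q) (hT : 1 ≤ T) (hn : 1 ≤ n) (hw : ∀ k, 1 ≤ N.w k) :
    (∀ S : Scheme N, Solves N S → Solves N.reciprocal S.reciprocal) ∧
    (LinearlySolvable N → LinearlySolvable N.reciprocal) := by
  have main : ∀ S : Scheme N, Solves N S → Solves N.reciprocal S.reciprocal := by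
    intro S hS
    obtain ⟨h1, h2⟩ := (solves_iff S).mp hS
    refine (solves_iff S.reciprocal).mpr ⟨fun k => ?_, fun k l hkl => ?_⟩
    · rw [Mmat_reciprocal S hT k k, h1 k, Matrix.transpose_one]
      rfl
    · rw [Mmat_reciprocal S hT k l, h2 l k (fun hh => hkl hh.symm), Matrix.transpose_zero]
      rfl
  exact ⟨main, fun ⟨S, hS⟩ => ⟨S.reciprocal, main S hS⟩⟩
end

section
/- Let N be a (T+1)-layered linear deterministic network over 𝔽_p with a linear coding scheme (C_k, F_j, D_k) and transfer coefficient matrices Γ_{lk}. Equip the reciprocal network N′ with the linear coding scheme C′_k = D_k^T, D′_k = C_k^T, F′_j = F_j^T, and let Γ′_{lk} denote its transfer coefficient matrices. Then Γ′_{lk} = (Γ_{kl})^T for all 1 ≤ l, k ≤ n. -/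
open Matrix

variable {p q T n : ℕ} {N : LayeredNetwork p q T n}

/-- The matrix product accumulated along a path `π = (j_0, j_1, …, j_T)`
(a choice of one node in each layer) up to layer `m`, starting with the
encoding matrix `C_l`:  `pathTransfer m = F_{j_m} · G_{j_{m-1} j_m} ⋯ F_{j_1} ·
G_{j_0 j_1} · C_l` for `1 ≤ m ≤ T - 1` (relay matrices at intermediate layers),
and `pathTransfer T = G_{j_{T-1} j_T} · pathTransfer (T-1)` (no relay matrix at
the destination layer). -/
def pathTransfer (S : Scheme N) (l : Fin n) (π : (m : Fin (T + 1)) → N.V m.val) :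
    (m : ℕ) → Matrix (Fin q) (Fin (N.w l)) (ZMod p)
  | 0 => S.C l
  | m + 1 =>
    if h : m + 1 < T then
      S.F (m + 1) (π ⟨m + 1, by omega⟩) *
          N.G m (π ⟨m, by omega⟩) (π ⟨m + 1, by omega⟩) * pathTransfer S l π m
    else if h' : m + 1 = T then
      N.G m (π ⟨m, by omega⟩) (π ⟨m + 1, by omega⟩) * pathTransfer S l π m
    else
      pathTransfer S l π m

/-- The transfer coefficient matrix `Γ_{lk} ∈ 𝔽_p^{w_k × w_l}`: the sum, over
all sequences of nodes `(j_0, j_1, …, j_T)` with `j_0 = S_l`, `j_m ∈ V_m` and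
`j_T = D_k`, of the product
`D_k · G_{j_{T-1} j_T} · F_{j_{T-1}} · G_{j_{T-2} j_{T-1}} ⋯ F_{j_1} · G_{j_0 j_1} · C_l`. -/
def transferMatrix (S : Scheme N) (l k : Fin n) :
    Matrix (Fin (N.w k)) (Fin (N.w l)) (ZMod p) :=
  ∑ π : (m : Fin (T + 1)) → N.V m.val,
    if π ⟨0, by omega⟩ = N.src l ∧ π (Fin.last T) = N.dst k then
      S.D k * pathTransfer S l π T
    else 0

section AuxRecip

/-- The reverse of a path of the reciprocal network, as a path of `N`. -/
def revPath (π : (m : Fin (T + 1)) → N.reciprocal.V m.val) (m : Fin (T + 1)) :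
    N.V m.val :=
  cast (congrArg N.V (by have := m.isLt; omega : T - (T - m.val) = m.val))
    (π ⟨T - m.val, by have := m.isLt; omega⟩)

theorem app_heq {V : ℕ → Type} (f : (m : Fin (T + 1)) → V m.val) {a b : ℕ}
    {ha : a < T + 1} {hb : b < T + 1} (h : a = b) :
    HEq (f ⟨a, ha⟩) (f ⟨b, hb⟩) := by subst h; rfl

theorem revPath_heq (π : (m : Fin (T + 1)) → N.reciprocal.V m.val) {x y : ℕ}
    {hx : x < T + 1} {hy : y < T + 1} (h : T - x = y) :
    HEq (revPath π ⟨x, hx⟩) (π ⟨y, hy⟩) :=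
  (cast_heq _ _).trans (app_heq π h)

theorem G_hcongr {a b : ℕ} (h : a = b) {i : N.V a} {i' : N.V b}
    {j : N.V (a + 1)} {j' : N.V (b + 1)} (hi : HEq i i') (hj : HEq j j') :
    N.G a i j = N.G b i' j' := by
  subst h; rw [eq_of_heq hi, eq_of_heq hj]

theorem F_hcongr (S : Scheme N) {a b : ℕ} (h : a = b) {i : N.V a} {i' : N.V b}
    (hi : HEq i i') : S.F a i = S.F b i' := by
  subst h; rw [eq_of_heq hi]

/-- The "remaining lower part" of the path product of `N`:
`Bmat b = G_{b-1} · (pathTransfer at b-1)` for `1 ≤ b ≤ T`, and `C_k` for `b = 0`. -/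
def Bmat (S : Scheme N) (k : Fin n) (π : (m : Fin (T + 1)) → N.reciprocal.V m.val) :
    ℕ → Matrix (Fin q) (Fin (N.w k)) (ZMod p)
  | 0 => S.C k
  | b + 1 =>
    if h : b + 1 ≤ T then
      N.G b (revPath π ⟨b, by omega⟩) (revPath π ⟨b + 1, by omega⟩) *
        pathTransfer S k (revPath π) b
    else 0

theorem key_lemma (S : Scheme N) (k l : Fin n)
    (π : (m : Fin (T + 1)) → N.reciprocal.V m.val) :
    ∀ a b : ℕ, a + b = T →
      (pathTransfer S.reciprocal l π a)ᵀ * Bmat S k π b =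
        S.D l * pathTransfer S k (revPath π) T := by
  intro a
  induction a with
  | zero =>
    intro b hb
    have h0 : pathTransfer S.reciprocal l π 0 = (S.D l)ᵀ := rfl
    rw [h0]
    change S.D l * Bmat S k π b = _
    congr 1
    cases b with
    | zero =>
      have hT0 : T = 0 := by omega
      subst hT0
      rfl
    | succ b' =>
      have hT : T = b' + 1 := by omega
      subst hT
      rw [Bmat, pathTransfer, dif_pos (le_refl (b' + 1)), dif_neg (lt_irrefl (b' + 1)),
        dif_pos rfl]
  | succ a ih =>
    intro b hab
    cases b with
    | zero =>
      have ha1 : a + 1 = T := by omega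
      rw [pathTransfer, dif_neg (by omega), dif_pos ha1]
      have hG : (N.reciprocal.G a (π ⟨a, by omega⟩) (π ⟨a + 1, by omega⟩))ᵀ =
          N.G 0 (revPath π ⟨0, by omega⟩) (revPath π ⟨1, by omega⟩) := by
        rw [show N.reciprocal.G a (π ⟨a, by omega⟩) (π ⟨a + 1, by omega⟩) =
            (N.G (T - a - 1) (π ⟨a + 1, by omega⟩)
              (cast (congrArg N.V (by omega : T - a = T - a - 1 + 1)) (π ⟨a, by omega⟩)))ᵀ
          from dif_pos (by omega), Matrix.transpose_transpose]
        exact G_hcongr (by omega)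
          ((revPath_heq π (by omega : T - 0 = a + 1)).symm)
          ((cast_heq _ _).trans (revPath_heq π (by omega : T - 1 = a)).symm)
      have hB1 : N.G 0 (revPath π ⟨0, by omega⟩) (revPath π ⟨1, by omega⟩) * Bmat S k π 0 =
          Bmat S k π 1 := by
        rw [Bmat, Bmat, dif_pos (by omega : 0 + 1 ≤ T)]
        rfl
      rw [Matrix.transpose_mul, Matrix.mul_assoc, hG, hB1]
      exact ih 1 (by omega)
    | succ b' =>
      have hlt : a + 1 < T := by omega
      rw [pathTransfer, dif_pos hlt]
      have hG : (N.reciprocal.G a (π ⟨a, by omega⟩) (π ⟨a + 1, by omega⟩))ᵀ =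
          N.G (b' + 1) (revPath π ⟨b' + 1, by omega⟩) (revPath π ⟨b' + 2, by omega⟩) := by
        rw [show N.reciprocal.G a (π ⟨a, by omega⟩) (π ⟨a + 1, by omega⟩) =
            (N.G (T - a - 1) (π ⟨a + 1, by omega⟩)
              (cast (congrArg N.V (by omega : T - a = T - a - 1 + 1)) (π ⟨a, by omega⟩)))ᵀ
          from dif_pos (by omega), Matrix.transpose_transpose]
        exact G_hcongr (by omega)
          ((revPath_heq π (by omega : T - (b' + 1) = a + 1)).symm)
          ((cast_heq _ _).trans (revPath_heq π (by omega : T - (b' + 2) = a)).symm)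
      have hF : (S.reciprocal.F (a + 1) (π ⟨a + 1, by omega⟩))ᵀ =
          S.F (b' + 1) (revPath π ⟨b' + 1, by omega⟩) := by
        rw [show S.reciprocal.F (a + 1) (π ⟨a + 1, by omega⟩) =
            (S.F (T - (a + 1)) (π ⟨a + 1, by omega⟩))ᵀ from rfl, Matrix.transpose_transpose]
        exact F_hcongr S (by omega)
          ((revPath_heq π (by omega : T - (b' + 1) = a + 1)).symm)
      have hstep :
          (N.reciprocal.G a (π ⟨a, by omega⟩) (π ⟨a + 1, by omega⟩))ᵀ *
            ((S.reciprocal.F (a + 1) (π ⟨a + 1, by omega⟩))ᵀ * Bmat S k π (b' + 1)) =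
          Bmat S k π (b' + 1 + 1) := by
        rw [hG, hF, Bmat, Bmat, dif_pos (by omega : b' + 1 ≤ T),
          dif_pos (by omega : b' + 1 + 1 ≤ T)]
        rw [show pathTransfer S k (revPath π) (b' + 1) =
            S.F (b' + 1) (revPath π ⟨b' + 1, by omega⟩) *
              N.G b' (revPath π ⟨b', by omega⟩) (revPath π ⟨b' + 1, by omega⟩) *
              pathTransfer S k (revPath π) b'
          from by rw [pathTransfer, dif_pos (by omega : b' + 1 < T)]]
        rw [Matrix.mul_assoc]
      rw [Matrix.transpose_mul, Matrix.transpose_mul, Matrix.mul_assoc, Matrix.mul_assoc, hstep]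
      exact ih (b' + 1 + 1) (by omega)

/-- The inverse of `revPath`. -/
def revPathInv (σ : (m : Fin (T + 1)) → N.V m.val) (m : Fin (T + 1)) :
    N.reciprocal.V m.val :=
  σ ⟨T - m.val, by have := m.isLt; omega⟩

theorem revPath_bijective :
    Function.Bijective (revPath (N := N)) := by
  refine Function.bijective_iff_has_inverse.mpr ⟨revPathInv, fun π => ?_, fun σ => ?_⟩
  · funext m
    exact eq_of_heq ((revPath_heq π (by have := m.isLt; omega : T - (T - m.val) = m.val)).trans
      (by rfl))
  · funext m
    exact eq_of_heq ((cast_heq _ _).trans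
      ((app_heq σ (by have := m.isLt; omega : T - (T - m.val) = m.val)).trans (by rfl)))

end AuxRecip

/-- **The transfer matrices of the reciprocal scheme are the transposes of the
transfer matrices of the original scheme.**  If the reciprocal network `N′` is
equipped with the linear coding scheme `C′_k = D_kᵀ, D′_k = C_kᵀ, F′_j = F_jᵀ`,
then its transfer coefficient matrices satisfy `Γ′_{lk} = (Γ_{kl})ᵀ` for all
`l, k`. -/
theorem transferMatrix_reciprocal_eq_transpose [Fact p.Prime]
    (hq : 1 ≤ q) (hT : 1 ≤ T) (hn : 1 ≤ n) (hw : ∀ k, 1 ≤ N.w k)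
    (S : Scheme N) (l k : Fin n) :
    transferMatrix S.reciprocal l k = (transferMatrix S k l)ᵀ := by
  have keyT : ∀ π : (m : Fin (T + 1)) → N.reciprocal.V m.val,
      S.reciprocal.D k * pathTransfer S.reciprocal l π T =
        (S.D l * pathTransfer S k (revPath π) T)ᵀ := by
    intro π
    have h := congrArg Matrix.transpose (key_lemma S k l π T 0 rfl)
    rw [Matrix.transpose_mul, Matrix.transpose_transpose] at h
    exact h
  rw [transferMatrix, transferMatrix, Matrix.transpose_sum]
  refine Fintype.sum_bijective revPath revPath_bijective _ _ (fun π => ?_)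
  have hcond : (π ⟨0, by omega⟩ = N.reciprocal.src l ∧
        π (Fin.last T) = N.reciprocal.dst k) ↔
      (revPath π ⟨0, by omega⟩ = N.src k ∧ revPath π (Fin.last T) = N.dst l) := by
    constructor
    · rintro ⟨h1, h2⟩
      exact ⟨eq_of_heq (((revPath_heq π (by omega : T - 0 = T)).trans
          (heq_of_eq h2)).trans (cast_heq _ _)),
        eq_of_heq ((revPath_heq π (by omega : T - T = 0)).trans (heq_of_eq h1))⟩
    · rintro ⟨h1, h2⟩
      exact ⟨eq_of_heq ((revPath_heq π (by omega : T - T = 0)).symm.trans (heq_of_eq h2)),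
        eq_of_heq (((revPath_heq π (by omega : T - 0 = T)).symm.trans
          (heq_of_eq h1)).trans (cast_heq _ _).symm)⟩
  by_cases h : π ⟨0, by omega⟩ = N.reciprocal.src l ∧ π (Fin.last T) = N.reciprocal.dst k
  · rw [if_pos h, if_pos (hcond.mp h), keyT π]
  · rw [if_neg h, if_neg (fun hc => h (hcond.mpr hc)), Matrix.transpose_zero]
    rfl
end

section
/- Let N be a (T+1)-layered linear deterministic network over 𝔽_p in which every channel gain matrix is a shift matrix, G_{ij} = S^{q−g_{ij}} with 0 ≤ g_{ij} ≤ q. Define the physical reciprocal network N″ to have the same layers in reversed order, the SAME channel gain matrix G″_{ji} = G_{ij} on each reversed edge, and messages with sources and destinations swapped. If the (transposed) reciprocal network N′ (which has G′_{ji} = G_{ij}^T) is linearly solved by a scheme (C′_k, F′_j, D′_k), then N″ is linearly solved by the flipped scheme (J C′_k, J F′_j J, D′_k J), where J is the q×q exchange matrix. In particular N″ is linearly solvable whenever N′ is. -/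
open Matrix

variable {p q T n : ℕ} {N : LayeredNetwork p q T n}

/-- The `r × r` down-shift matrix over `𝔽_p`: `S i j = 1` if `i = j + 1` and
`0` otherwise. -/
def downShift (p r : ℕ) : Matrix (Fin r) (Fin r) (ZMod p) :=
  Matrix.of fun i j => if (i : ℕ) = (j : ℕ) + 1 then 1 else 0

/-- The `r × r` exchange (flip) matrix over `𝔽_p`: `J i j = 1` iff
`i + j + 1 = r` (one-based: `J_{ij} = 1` iff `i + j = r + 1`). -/
def exchange (p r : ℕ) : Matrix (Fin r) (Fin r) (ZMod p) :=
  Matrix.of fun i j => if (i : ℕ) + (j : ℕ) + 1 = r then 1 else 0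

/-- The *physical* reciprocal network `N″`: the layers in reversed order,
the **same** channel gain matrix `G″_{ji} = G_{ij}` on each reversed edge
(no transpose), and the roles of sources and destinations swapped. -/
def LayeredNetwork.physicalReciprocal (N : LayeredNetwork p q T n) :
    LayeredNetwork p q T n where
  V := fun m => N.V (T - m)
  fintypeV := fun m => N.fintypeV (T - m)
  decEqV := fun m => N.decEqV (T - m)
  G := fun m j i =>
    if h : m < T then
      N.G (T - m - 1) i (cast (congrArg N.V (by omega : T - m = T - m - 1 + 1)) j)
    else 0
  w := N.w
  src := N.dst
  dst := fun k => cast (congrArg N.V (by omega : (0 : ℕ) = T - T)) (N.src k)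

/-- The flipped scheme `(J C′_k, J F′_j J, D′_k J)`: every node flips its
vector before transmitting and flips the vector it receives before coding. -/
def flipScheme (S' : Scheme N.reciprocal) : Scheme N.physicalReciprocal where
  C := fun k => exchange p q * S'.C k
  F := fun m j => exchange p q * S'.F m j * exchange p q
  D := fun k => S'.D k * exchange p q

section Aux

/-- index flip on `Fin q` -/
def flipIdx {q : ℕ} (i : Fin q) : Fin q := ⟨q - 1 - i, by have := i.isLt; omega⟩

lemma flipIdx_val {q : ℕ} (i : Fin q) : ((flipIdx i : Fin q) : ℕ) = q - 1 - i := rfl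

lemma exchange_mul_apply (A : Matrix (Fin q) (Fin q) (ZMod p)) (i j : Fin q) :
    (exchange p q * A) i j = A (flipIdx i) j := by
  simp only [Matrix.mul_apply, exchange, Matrix.of_apply]
  rw [Finset.sum_eq_single (flipIdx i)]
  · have hc : (i : ℕ) + ((flipIdx i : Fin q) : ℕ) + 1 = q := by
      have := i.isLt; rw [flipIdx_val]; omega
    rw [if_pos hc, one_mul]
  · intro k _ hk
    have hc : ¬ ((i : ℕ) + (k : ℕ) + 1 = q) := by
      intro h
      exact hk (Fin.ext (by have := i.isLt; have := k.isLt; rw [flipIdx_val]; omega))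
    rw [if_neg hc, zero_mul]
  · simp

lemma mul_exchange_apply (A : Matrix (Fin q) (Fin q) (ZMod p)) (i j : Fin q) :
    (A * exchange p q) i j = A i (flipIdx j) := by
  simp only [Matrix.mul_apply, exchange, Matrix.of_apply]
  rw [Finset.sum_eq_single (flipIdx j)]
  · have hc : (((flipIdx j : Fin q)) : ℕ) + (j : ℕ) + 1 = q := by
      have := j.isLt; rw [flipIdx_val]; omega
    rw [if_pos hc, mul_one]
  · intro k _ hk
    have hc : ¬ ((k : ℕ) + (j : ℕ) + 1 = q) := by
      intro h
      exact hk (Fin.ext (by have := j.isLt; have := k.isLt; rw [flipIdx_val]; omega))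
    rw [if_neg hc, mul_zero]
  · simp

lemma exchange_sq : exchange p q * exchange p q = 1 := by
  ext i j
  rw [exchange_mul_apply]
  have hi := i.isLt; have hj := j.isLt
  simp only [exchange, Matrix.of_apply, Matrix.one_apply, flipIdx_val]
  by_cases h : i = j
  · subst h; exact (if_pos (show q - 1 - (i : ℕ) + (i : ℕ) + 1 = q by omega)).trans (if_pos rfl).symm
  · have : ¬ (q - 1 - (i : ℕ) + (j : ℕ) + 1 = q) := by
      intro hc; exact h (Fin.ext (by omega))
    exact (if_neg this).trans (if_neg h).symm

lemma exchange_mul_shift :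
    exchange p q * downShift p q = (downShift p q)ᵀ * exchange p q := by
  ext i j
  rw [exchange_mul_apply, mul_exchange_apply]
  have hi := i.isLt; have hj := j.isLt
  simp only [downShift, Matrix.of_apply, Matrix.transpose_apply, flipIdx_val]
  by_cases h : (i : ℕ) + (j : ℕ) + 2 = q
  · exact (if_pos (show q - 1 - (i : ℕ) = (j : ℕ) + 1 by omega)).trans
      (if_pos (show q - 1 - (j : ℕ) = (i : ℕ) + 1 by omega)).symm
  · exact (if_neg (show ¬ (q - 1 - (i : ℕ) = (j : ℕ) + 1) by omega)).trans
      (if_neg (show ¬ (q - 1 - (j : ℕ) = (i : ℕ) + 1) by omega)).symm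

lemma exchange_mul_pow (e : ℕ) :
    exchange p q * downShift p q ^ e = (downShift p q ^ e)ᵀ * exchange p q := by
  induction e with
  | zero => simp
  | succ e ih =>
    calc exchange p q * downShift p q ^ (e + 1)
        = (exchange p q * downShift p q ^ e) * downShift p q := by
          rw [pow_succ, mul_assoc]
      _ = (downShift p q ^ e)ᵀ * (exchange p q * downShift p q) := by
          rw [ih, mul_assoc]
      _ = (downShift p q ^ e)ᵀ * (downShift p q)ᵀ * exchange p q := by
          rw [exchange_mul_shift, mul_assoc]
      _ = (downShift p q ^ (e + 1))ᵀ * exchange p q := by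
          rw [← Matrix.transpose_mul, ← pow_succ']

lemma mulVec_sum' {m : Type*} [Fintype m] (A : Matrix (Fin q) (Fin q) (ZMod p))
    (f : m → Fin q → ZMod p) :
    A.mulVec (∑ i : m, f i) = ∑ i : m, A.mulVec (f i) := by
  funext r
  simp only [Matrix.mulVec, dotProduct, Finset.sum_apply, Finset.mul_sum]
  exact Finset.sum_comm

lemma keyG (g : (m : ℕ) → N.V m → N.V (m + 1) → ℕ)
    (hshift : ∀ m, m < T → ∀ i j, N.G m i j = downShift p q ^ (q - g m i j))
    (m : ℕ) (hm : m < T) (a : N.physicalReciprocal.V m)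
    (b : N.physicalReciprocal.V (m + 1)) :
    exchange p q * N.physicalReciprocal.G m a b =
      N.reciprocal.G m a b * exchange p q := by
  show exchange p q *
      (if h : m < T then
        N.G (T - m - 1) b (cast (congrArg N.V (by omega : T - m = T - m - 1 + 1)) a)
      else 0) =
    (if h : m < T then
        (N.G (T - m - 1) b (cast (congrArg N.V (by omega : T - m = T - m - 1 + 1)) a))ᵀ
      else 0) * exchange p q
  rw [dif_pos hm, dif_pos hm,
    hshift (T - m - 1) (by omega) b (cast (congrArg N.V (by omega)) a),
    exchange_mul_pow]

lemma keyG' (g : (m : ℕ) → N.V m → N.V (m + 1) → ℕ)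
    (hshift : ∀ m, m < T → ∀ i j, N.G m i j = downShift p q ^ (q - g m i j))
    (m : ℕ) (hm : m < T) (a : N.physicalReciprocal.V m)
    (b : N.physicalReciprocal.V (m + 1)) :
    N.physicalReciprocal.G m a b * exchange p q =
      exchange p q * N.reciprocal.G m a b := by
  have h := keyG g hshift m hm a b
  have h2 : exchange p q * exchange p q = (1 : Matrix (Fin q) (Fin q) (ZMod p)) :=
    exchange_sq
  calc N.physicalReciprocal.G m a b * exchange p q
      = (exchange p q * exchange p q) * N.physicalReciprocal.G m a b *
          exchange p q := by rw [h2, one_mul]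
    _ = exchange p q * (exchange p q * N.physicalReciprocal.G m a b) *
          exchange p q := by rw [mul_assoc (exchange p q)]
    _ = exchange p q * (N.reciprocal.G m a b * exchange p q) * exchange p q := by
          rw [h]
    _ = exchange p q * N.reciprocal.G m a b * (exchange p q * exchange p q) := by
          rw [mul_assoc, mul_assoc, mul_assoc]
    _ = exchange p q * N.reciprocal.G m a b := by rw [h2, mul_one]

lemma flip_summand (g : (m : ℕ) → N.V m → N.V (m + 1) → ℕ)
    (hshift : ∀ m, m < T → ∀ i j, N.G m i j = downShift p q ^ (q - g m i j))
    (m : ℕ) (hm : m < T) (a : N.physicalReciprocal.V m)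
    (b : N.physicalReciprocal.V (m + 1)) (v : Fin q → ZMod p) :
    (N.physicalReciprocal.G m a b).mulVec ((exchange p q).mulVec v) =
      (exchange p q).mulVec ((N.reciprocal.G m a b).mulVec v) := by
  rw [Matrix.mulVec_mulVec, Matrix.mulVec_mulVec, keyG' g hshift m hm a b]

lemma flipF_mulVec (F : Matrix (Fin q) (Fin q) (ZMod p)) (v : Fin q → ZMod p) :
    (exchange p q * F * exchange p q).mulVec ((exchange p q).mulVec v) =
      (exchange p q).mulVec (F.mulVec v) := by
  rw [Matrix.mulVec_mulVec, mul_assoc (exchange p q * F), exchange_sq, mul_one,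
    ← Matrix.mulVec_mulVec]

lemma xSig_flip (g : (m : ℕ) → N.V m → N.V (m + 1) → ℕ)
    (hshift : ∀ m, m < T → ∀ i j, N.G m i j = downShift p q ^ (q - g m i j))
    (S' : Scheme N.reciprocal) (W : Msg N.reciprocal) :
    ∀ m, m ≤ T → ∀ j : N.physicalReciprocal.V m,
      xSig (flipScheme S') W m j = (exchange p q).mulVec (xSig S' W m j) := by
  intro m
  induction m with
  | zero =>
    intro _ j
    change N.V T at j
    show (∑ k : Fin n, @ite _ (N.dst k = j) (N.decEqV T (N.dst k) j)
        (((flipScheme S').C k).mulVec (W k)) 0) =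
      (exchange p q).mulVec (∑ k : Fin n, @ite _ (N.dst k = j)
        (N.decEqV T (N.dst k) j) ((S'.C k).mulVec (W k)) 0)
    rw [mulVec_sum']
    refine Finset.sum_congr rfl fun k _ => ?_
    rw [apply_ite ((exchange p q).mulVec), Matrix.mulVec_zero]
    by_cases h : N.dst k = j
    · rw [if_pos h, if_pos h]
      show (exchange p q * S'.C k).mulVec (W k) = _
      rw [← Matrix.mulVec_mulVec]
    · rw [if_neg h, if_neg h]
  | succ m ih =>
    intro hm j
    have hmT : m < T := hm
    show ((flipScheme S').F (m + 1) j).mulVec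
        (∑ i : N.physicalReciprocal.V m,
          (N.physicalReciprocal.G m i j).mulVec (xSig (flipScheme S') W m i)) =
      (exchange p q).mulVec ((S'.F (m + 1) j).mulVec
        (∑ i : N.reciprocal.V m,
          (N.reciprocal.G m i j).mulVec (xSig S' W m i)))
    have hx : (∑ i : N.physicalReciprocal.V m,
        (N.physicalReciprocal.G m i j).mulVec (xSig (flipScheme S') W m i)) =
          (exchange p q).mulVec (∑ i : N.reciprocal.V m,
            (N.reciprocal.G m i j).mulVec (xSig S' W m i)) := by
      rw [mulVec_sum']
      refine Finset.sum_congr rfl fun i _ => ?_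
      rw [ih (by omega) i, flip_summand g hshift m hmT i j]
    rw [hx]
    show (exchange p q * S'.F (m + 1) j * exchange p q).mulVec
        ((exchange p q).mulVec _) = _
    rw [flipF_mulVec]

lemma ySig_flip (g : (m : ℕ) → N.V m → N.V (m + 1) → ℕ)
    (hshift : ∀ m, m < T → ∀ i j, N.G m i j = downShift p q ^ (q - g m i j))
    (S' : Scheme N.reciprocal) (W : Msg N.reciprocal)
    (m : ℕ) (hm : m + 1 ≤ T) (j : N.physicalReciprocal.V (m + 1)) :
    ySig (flipScheme S') W (m + 1) j =
      (exchange p q).mulVec (ySig S' W (m + 1) j) := by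
  show (∑ i : N.physicalReciprocal.V m,
      (N.physicalReciprocal.G m i j).mulVec (xSig (flipScheme S') W m i)) =
    (exchange p q).mulVec (∑ i : N.reciprocal.V m,
      (N.reciprocal.G m i j).mulVec (xSig S' W m i))
  rw [mulVec_sum']
  refine Finset.sum_congr rfl fun i _ => ?_
  rw [xSig_flip g hshift S' W m (by omega) i, flip_summand g hshift m (by omega) i j]

end Aux

/-- **Physical reciprocity of shift linear deterministic networks.**  Suppose
every channel gain matrix of `N` is a shift matrix `G_{ij} = S^{q - g_{ij}}`
with `0 ≤ g_{ij} ≤ q`.  If the (transposed) reciprocal network `N′` (with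
`G′_{ji} = G_{ij}ᵀ`) is linearly solved by a scheme `(C′_k, F′_j, D′_k)`, then
the physical reciprocal network `N″` (with `G″_{ji} = G_{ij}`) is linearly
solved by the flipped scheme `(J C′_k, J F′_j J, D′_k J)`.  In particular `N″`
is linearly solvable whenever `N′` is. -/
theorem physical_reciprocity_of_shift_network [Fact p.Prime]
    (hq : 1 ≤ q) (hT : 1 ≤ T) (hn : 1 ≤ n) (hw : ∀ k, 1 ≤ N.w k)
    (g : (m : ℕ) → N.V m → N.V (m + 1) → ℕ)
    (hgle : ∀ m, m < T → ∀ i j, g m i j ≤ q)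
    (hshift : ∀ m, m < T → ∀ i j, N.G m i j = downShift p q ^ (q - g m i j)) :
    (∀ S' : Scheme N.reciprocal,
        Solves N.reciprocal S' → Solves N.physicalReciprocal (flipScheme S')) ∧
    (LinearlySolvable N.reciprocal → LinearlySolvable N.physicalReciprocal) := by
  have main : ∀ S' : Scheme N.reciprocal,
      Solves N.reciprocal S' → Solves N.physicalReciprocal (flipScheme S') := by
    intro S' hS W k
    obtain ⟨t, rfl⟩ : ∃ t, T = t + 1 := ⟨T - 1, by omega⟩
    show ((flipScheme S').D k).mulVec
        (ySig (flipScheme S') W (t + 1) (N.physicalReciprocal.dst k)) = W k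
    rw [ySig_flip g hshift S' W t le_rfl (N.physicalReciprocal.dst k)]
    show (S'.D k * exchange p q).mulVec ((exchange p q).mulVec _) = W k
    rw [Matrix.mulVec_mulVec, Matrix.mul_assoc, exchange_sq, Matrix.mul_one]
    exact hS W k
  exact ⟨main, fun ⟨S', hS⟩ => ⟨flipScheme S', main S' hS⟩⟩
end

section
/- Let N be a linear deterministic network over 𝔽_p on a finite directed graph with channel gain matrices G_{ij} ∈ 𝔽_p^{q×q} on its edges, with n unicast messages of lengths w_k, and suppose N is solvable over T time steps by a causal linear coding scheme. Then the reciprocal network N′ — obtained by reversing every edge, assigning channel gain matrix G′_{ji} = G_{ij}^T to each reversed edge, and swapping the source and destination node of every message — is also solvable over T time steps by a causal linear coding scheme. -/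
open Matrix

/-- A linear deterministic network over `𝔽_p = ZMod p` on a finite directed
graph `(V, E)`: a channel gain matrix `G i j ∈ 𝔽_p^{q×q}` for every edge
`(i, j) ∈ E`, and `n` unicast messages, message `k` having length `w k`,
source node `src k` and destination node `dst k`. -/
structure GenNetwork (p q n : ℕ) where
  V : Type
  fintypeV : Fintype V
  decEqV : DecidableEq V
  E : V → V → Prop
  decE : DecidableRel E
  G : V → V → Matrix (Fin q) (Fin q) (ZMod p)
  w : Fin n → ℕ
  src : Fin n → V
  dst : Fin n → V

attribute [instance] GenNetwork.fintypeV GenNetwork.decEqV GenNetwork.decE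

variable {p q n : ℕ}

/-- A causal linear coding scheme over `T` time steps (`T` is implicit in the
range of time indices actually used, `0, …, T-1`): at time `m` node `j`
transmits `x_j[m] = ∑_{m' < m} A j m m' · y_j[m'] + ∑_{k : src k = j} B j m k · W_k`,
a fixed linear function of its previously received signals and of the messages
available at it; destination `k` forms the estimate
`Ŵ_k = ∑_{m < T} D k m · y_{dst k}[m]`, a fixed linear function of its received
signals. -/
structure CausalScheme (p q n : ℕ) (N : GenNetwork p q n) where
  A : N.V → ℕ → ℕ → Matrix (Fin q) (Fin q) (ZMod p)
  B : N.V → ℕ → (k : Fin n) → Matrix (Fin q) (Fin (N.w k)) (ZMod p)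
  D : (k : Fin n) → ℕ → Matrix (Fin (N.w k)) (Fin q) (ZMod p)

variable {N : GenNetwork p q n}

/-- A tuple of messages `W k ∈ 𝔽_p^{w k}`. -/
def GMsg (N : GenNetwork p q n) : Type :=
  (k : Fin n) → Fin (N.w k) → ZMod p

/-- The signal `x_j[m]` transmitted by node `j` at time `m`: a fixed (causal)
linear function of the signals `y_j[0], …, y_j[m-1]` received so far, where
`y_j[m'] = ∑_{i : (i,j) ∈ E} G i j · x_i[m']`, and of the messages `W_k` with
`src k = j`. -/
def gxSig (S : CausalScheme p q n N) (W : GMsg N) : ℕ → N.V → (Fin q → ZMod p)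
  | m, j =>
    (∑ t : Fin m,
        (S.A j m t.val).mulVec
          (∑ i : N.V, if N.E i j then (N.G i j).mulVec (gxSig S W t.val i) else 0)) +
      ∑ k : Fin n, if N.src k = j then (S.B j m k).mulVec (W k) else 0
  termination_by m _ => m
  decreasing_by exact t.isLt

/-- The signal `y_j[m] = ∑_{i : (i,j) ∈ E} G i j · x_i[m]` received by node `j`
at time `m`. -/
def gySig (S : CausalScheme p q n N) (W : GMsg N) (m : ℕ) (j : N.V) :
    Fin q → ZMod p :=
  ∑ i : N.V, if N.E i j then (N.G i j).mulVec (gxSig S W m i) else 0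

/-- The estimate `Ŵ_k = ∑_{m < T} D k m · y_{dst k}[m]` formed by the
destination of message `k` from the signals it received during time steps
`0, …, T-1`. -/
def gdecode (T : ℕ) (S : CausalScheme p q n N) (W : GMsg N) (k : Fin n) :
    Fin (N.w k) → ZMod p :=
  ∑ m : Fin T, (S.D k m.val).mulVec (gySig S W m.val (N.dst k))

/-- The causal linear scheme solves the network over `T` time steps:
`Ŵ_k = W_k` for every message index `k` and every choice of messages. -/
def GSolves (T : ℕ) (N : GenNetwork p q n) (S : CausalScheme p q n N) : Prop :=
  ∀ (W : GMsg N) (k : Fin n), gdecode T S W k = W k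

/-- The network is solvable over `T` time steps by a causal linear coding scheme. -/
def GLinearlySolvable (T : ℕ) (N : GenNetwork p q n) : Prop :=
  ∃ S : CausalScheme p q n N, GSolves T N S

/-- The reciprocal network `N′`: every edge is reversed, the channel gain
matrix on each reversed edge is the transpose of the original one
(`G′ j i = (G i j)ᵀ`), and the source and destination node of every message
are swapped. -/
def GenNetwork.reciprocal (N : GenNetwork p q n) : GenNetwork p q n where
  V := N.V
  fintypeV := N.fintypeV
  decEqV := N.decEqV
  E := fun i j => N.E j i
  decE := fun i j => N.decE j i
  G := fun i j => (N.G j i)ᵀ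
  w := N.w
  src := N.dst
  dst := fun k => N.src k

namespace RecipAux

variable {p q n : ℕ}

abbrev Idx (T : ℕ) (N : GenNetwork p q n) : Type := Fin T × N.V × Fin q
abbrev MIdx (N : GenNetwork p q n) : Type := Σ k : Fin n, Fin (N.w k)

def bigG (T : ℕ) (N : GenNetwork p q n) : Matrix (Idx T N) (Idx T N) (ZMod p) :=
  fun u v => if u.1 = v.1 ∧ N.E v.2.1 u.2.1 then N.G v.2.1 u.2.1 u.2.2 v.2.2 else 0

def bigA (T : ℕ) (N : GenNetwork p q n) (S : CausalScheme p q n N) :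
    Matrix (Idx T N) (Idx T N) (ZMod p) :=
  fun u v => if u.2.1 = v.2.1 ∧ (v.1 : ℕ) < (u.1 : ℕ) then
    S.A u.2.1 u.1 v.1 u.2.2 v.2.2 else 0

def bigB (T : ℕ) (N : GenNetwork p q n) (S : CausalScheme p q n N) :
    Matrix (Idx T N) (MIdx N) (ZMod p) :=
  fun u k => if N.src k.1 = u.2.1 then S.B u.2.1 u.1 k.1 u.2.2 k.2 else 0

def bigD (T : ℕ) (N : GenNetwork p q n) (S : CausalScheme p q n N) :
    Matrix (MIdx N) (Idx T N) (ZMod p) :=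
  fun k u => if N.dst k.1 = u.2.1 then S.D k.1 u.1 k.2 u.2.2 else 0

def bigS (T : ℕ) (N : GenNetwork p q n) (S : CausalScheme p q n N) :
    Matrix (Idx T N) (Idx T N) (ZMod p) :=
  ∑ i ∈ Finset.range T, (bigA T N S * bigG T N) ^ i

def bigM (T : ℕ) (N : GenNetwork p q n) (S : CausalScheme p q n N) :
    Matrix (MIdx N) (MIdx N) (ZMod p) :=
  bigD T N S * bigG T N * bigS T N S * bigB T N S

def Wvec {N : GenNetwork p q n} (W : GMsg N) : MIdx N → ZMod p := fun k => W k.1 k.2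

def xvec (T : ℕ) {N : GenNetwork p q n} (S : CausalScheme p q n N) (W : GMsg N) :
    Idx T N → ZMod p := fun u => gxSig S W u.1 u.2.1 u.2.2

def yvec (T : ℕ) {N : GenNetwork p q n} (S : CausalScheme p q n N) (W : GMsg N) :
    Idx T N → ZMod p := fun u => gySig S W u.1 u.2.1 u.2.2

variable {T : ℕ} {N : GenNetwork p q n} {S : CausalScheme p q n N} {W : GMsg N}

lemma bigG_mulVec : bigG T N *ᵥ xvec T S W = yvec T S W := by
  funext u
  obtain ⟨m, j, a⟩ := u
  simp only [Matrix.mulVec, dotProduct, bigG, xvec, yvec, gySig]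
  rw [Fintype.sum_prod_type]
  rw [Finset.sum_eq_single m]
  · rw [Fintype.sum_prod_type]
    simp only [Finset.sum_apply, Finset.sum_congr]
    refine Finset.sum_congr rfl fun i _ => ?_
    by_cases h : N.E i j
    · simp [h, Matrix.mulVec, dotProduct]
    · simp [h]
  · intro b _ hb
    simp only [Fintype.sum_prod_type]
    refine Finset.sum_eq_zero fun i _ => Finset.sum_eq_zero fun c _ => ?_
    rw [if_neg (fun hc => hb hc.1.symm), zero_mul]
  · simp


lemma bigA_mulVec {m : Fin T} {j : N.V} {a : Fin q} :
    (bigA T N S *ᵥ yvec T S W) (m, j, a) =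
      ∑ t ∈ Finset.range (m : ℕ), ((S.A j m t).mulVec (gySig S W t j)) a := by
  simp only [Matrix.mulVec, dotProduct, bigA]
  rw [Fintype.sum_prod_type]
  have key : ∀ t : Fin T,
      (∑ x : N.V × Fin q,
        (if j = x.1 ∧ (t : ℕ) < (m : ℕ) then S.A j m t a x.2 else 0) *
          yvec T S W (t, x.1, x.2)) =
      if (t : ℕ) < (m : ℕ) then ((S.A j m t).mulVec (gySig S W t j)) a else 0 := by
    intro t
    by_cases h : (t : ℕ) < (m : ℕ)
    · rw [if_pos h, Fintype.sum_prod_type, Finset.sum_eq_single j]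
      · simp [h, Matrix.mulVec, dotProduct, yvec]
      · intro i _ hij
        refine Finset.sum_eq_zero fun b _ => ?_
        rw [if_neg (fun hc => hij hc.1.symm), zero_mul]
      · simp
    · simp [h]
  rw [Finset.sum_congr rfl (fun t _ => key t),
    Fin.sum_univ_eq_sum_range
      (fun t => if t < (m : ℕ) then ((S.A j m t).mulVec (gySig S W t j)) a else 0) T,
    ← Finset.sum_subset (Finset.range_subset_range.mpr m.isLt.le)
      (fun x _ hx => if_neg (fun hc => hx (Finset.mem_range.mpr hc)))]
  exact Finset.sum_congr rfl fun t ht => if_pos (Finset.mem_range.mp ht)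

lemma bigB_mulVec {m : Fin T} {j : N.V} {a : Fin q} :
    (bigB T N S *ᵥ Wvec W) (m, j, a) =
      (∑ k : Fin n, if N.src k = j then ((S.B j (m : ℕ) k).mulVec (W k)) else 0) a := by
  simp only [Matrix.mulVec, dotProduct, bigB, Wvec, Finset.sum_apply]
  rw [← Finset.univ_sigma_univ, Finset.sum_sigma]
  refine Finset.sum_congr rfl fun k _ => ?_
  by_cases h : N.src k = j
  · simp [h, Matrix.mulVec, dotProduct]
  · simp [h]

lemma xvec_fix :
    xvec T S W = bigA T N S *ᵥ yvec T S W + bigB T N S *ᵥ Wvec W := by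
  funext u
  obtain ⟨m, j, a⟩ := u
  rw [Pi.add_apply, bigA_mulVec, bigB_mulVec]
  show gxSig S W (m : ℕ) j a = _
  rw [gxSig]
  rw [Pi.add_apply, Finset.sum_apply]
  have key : ∀ c : Fin (m : ℕ),
      ((S.A j m c).mulVec (∑ i : N.V, if N.E i j then (N.G i j).mulVec (gxSig S W c i) else 0)) a
        = ((S.A j m c).mulVec (gySig S W c j)) a := fun c => rfl
  rw [Finset.sum_congr rfl (fun c _ => key c),
    Fin.sum_univ_eq_sum_range (fun t => ((S.A j m t).mulVec (gySig S W t j)) a) (m : ℕ)]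
lemma decode_vec :
    (fun κ : MIdx N => gdecode T S W κ.1 κ.2) = bigD T N S *ᵥ yvec T S W := by
  funext κ
  obtain ⟨k, c⟩ := κ
  simp only [gdecode, Matrix.mulVec, dotProduct, bigD, Finset.sum_apply]
  rw [Fintype.sum_prod_type]
  refine Finset.sum_congr rfl fun m _ => ?_
  rw [Fintype.sum_prod_type, Finset.sum_eq_single (N.dst k)]
  · simp [Matrix.mulVec, dotProduct, yvec]
  · intro j _ hj
    refine Finset.sum_eq_zero fun b _ => ?_
    rw [if_neg (fun hc => hj hc.symm), zero_mul]
  · simp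

/-- Strictly "time-lower-triangular" matrices are nilpotent. -/
lemma pow_eq_zero_aux {ι : Type*} [Fintype ι] [DecidableEq ι] (f : ι → ℕ)
    (M : Matrix ι ι (ZMod p)) (hM : ∀ u v, ¬ f v < f u → M u v = 0) :
    ∀ (k : ℕ) (u v : ι), ¬ (f v + k ≤ f u) → (M ^ k) u v = 0 := by
  intro k
  induction k with
  | zero =>
    intro u v h
    simp only [pow_zero, Matrix.one_apply]
    rw [if_neg]
    rintro rfl
    exact h (by omega)
  | succ k ih =>
    intro u v h
    rw [pow_succ, Matrix.mul_apply]
    refine Finset.sum_eq_zero fun x _ => ?_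
    by_cases hx : f x + k ≤ f u
    · rw [hM x v (by omega), mul_zero]
    · rw [ih u x hx, zero_mul]

lemma bigAG_nilpotent : (bigA T N S * bigG T N) ^ T = 0 := by
  have hM : ∀ u v : Idx T N, ¬ (v.1 : ℕ) < (u.1 : ℕ) → (bigA T N S * bigG T N) u v = 0 := by
    intro u v huv
    rw [Matrix.mul_apply]
    refine Finset.sum_eq_zero fun x _ => ?_
    by_cases hx : (x.1 : ℕ) < (u.1 : ℕ)
    · rw [bigG, if_neg, mul_zero]
      rintro ⟨h1, -⟩
      exact huv (by rw [← h1]; exact hx)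
    · rw [bigA, if_neg (fun hc => hx hc.2), zero_mul]
  ext u v
  rw [pow_eq_zero_aux (fun u : Idx T N => (u.1 : ℕ)) _ hM T u v ?_, Matrix.zero_apply]
  have := v.1.isLt
  change ¬ ((v.1 : ℕ) + T ≤ (u.1 : ℕ))
  omega

lemma xvec_eq : xvec T S W = bigS T N S *ᵥ (bigB T N S *ᵥ Wvec W) := by
  have hfix : xvec T S W = (bigA T N S * bigG T N) *ᵥ xvec T S W + bigB T N S *ᵥ Wvec W := by
    rw [← Matrix.mulVec_mulVec, bigG_mulVec]; exact xvec_fix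
  have key : ∀ j : ℕ, xvec T S W =
      ((bigA T N S * bigG T N) ^ j) *ᵥ xvec T S W +
        (∑ i ∈ Finset.range j, (bigA T N S * bigG T N) ^ i) *ᵥ (bigB T N S *ᵥ Wvec W) := by
    intro j
    induction j with
    | zero => simp
    | succ j ih =>
      calc xvec T S W
          = ((bigA T N S * bigG T N) ^ j) *ᵥ
              ((bigA T N S * bigG T N) *ᵥ xvec T S W + bigB T N S *ᵥ Wvec W) +
            (∑ i ∈ Finset.range j, (bigA T N S * bigG T N) ^ i) *ᵥ (bigB T N S *ᵥ Wvec W) := by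
            rw [← hfix]; exact ih
        _ = _ := by
            rw [Matrix.mulVec_add, Matrix.mulVec_mulVec, ← pow_succ,
              Finset.sum_range_succ, Matrix.add_mulVec, add_assoc,
              add_comm ((bigA T N S * bigG T N) ^ j *ᵥ (bigB T N S *ᵥ Wvec W)) _, ← add_assoc]
  have := key T
  rwa [bigAG_nilpotent, Matrix.zero_mulVec, zero_add] at this

lemma decode_vec_M :
    (fun κ : MIdx N => gdecode T S W κ.1 κ.2) = bigM T N S *ᵥ Wvec W := by
  rw [decode_vec, ← bigG_mulVec (S := S) (W := W), xvec_eq, bigM,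
    Matrix.mulVec_mulVec, Matrix.mulVec_mulVec, Matrix.mulVec_mulVec]
lemma solves_iff : GSolves T N S ↔ bigM T N S = 1 := by
  constructor
  · intro hs
    have h2 : ∀ v : MIdx N → ZMod p, bigM T N S *ᵥ v = v := by
      intro v
      have h1 := decode_vec_M (T := T) (S := S) (W := fun k c => v ⟨k, c⟩)
      have h0 : Wvec (N := N) (fun k c => v ⟨k, c⟩) = v := by
        funext κ; obtain ⟨k, c⟩ := κ; rfl
      rw [h0] at h1
      rw [← h1]
      funext κ
      have := congrFun (hs (fun k c => v ⟨k, c⟩) κ.1) κ.2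
      simpa using this
    ext κ κ'
    have h3 := congrFun (h2 (Pi.single κ' (1 : ZMod p))) κ
    rw [Matrix.mulVec_single] at h3
    simp only [Pi.smul_apply, MulOpposite.op_one, one_smul, Matrix.col_apply] at h3
    rw [h3, Matrix.one_apply, Pi.single_apply]
  · intro hM W k
    funext c
    have h1 := congrFun (decode_vec_M (T := T) (S := S) (W := W)) ⟨k, c⟩
    rw [hM, Matrix.one_mulVec] at h1
    exact h1

/-- The reciprocal (time-reversed, transposed) scheme. -/
def revScheme (T : ℕ) (N : GenNetwork p q n) (S : CausalScheme p q n N) :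
    CausalScheme p q n N.reciprocal where
  A := fun j m t => (S.A j (T - (t + 1)) (T - (m + 1)))ᵀ
  B := fun j m k => (S.D k (T - (m + 1)))ᵀ
  D := fun k m => (S.B (N.src k) (T - (m + 1)) k)ᵀ

def tRev (T : ℕ) (N : GenNetwork p q n) : Idx T N ≃ Idx T N :=
  (Fin.revPerm).prodCongr (Equiv.refl _)

lemma tRev_apply (u : Idx T N) : tRev T N u = (u.1.rev, u.2) := rfl

lemma rev_bigG : bigG T N.reciprocal = ((bigG T N)ᵀ).submatrix (tRev T N) (tRev T N) := by
  ext u v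
  obtain ⟨m, j, a⟩ := u
  obtain ⟨m', i, b⟩ := v
  simp only [bigG, GenNetwork.reciprocal, Matrix.submatrix_apply, Matrix.transpose_apply,
    tRev_apply]
  by_cases h : m = m' ∧ N.E j i
  · exact (if_pos h).trans (if_pos (show m'.rev = m.rev ∧ N.E j i from ⟨by rw [h.1], h.2⟩)).symm
  · exact (if_neg h).trans (if_neg (show ¬(m'.rev = m.rev ∧ N.E j i) from
      fun hc => h ⟨Fin.rev_inj.mp hc.1.symm, hc.2⟩)).symm

lemma rev_bigA : bigA T N.reciprocal (revScheme T N S)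
    = ((bigA T N S)ᵀ).submatrix (tRev T N) (tRev T N) := by
  ext u v
  obtain ⟨m, j, a⟩ := u
  obtain ⟨t, i, b⟩ := v
  simp only [bigA, revScheme, GenNetwork.reciprocal, Matrix.submatrix_apply,
    Matrix.transpose_apply, tRev_apply]
  by_cases h : j = i ∧ (t : ℕ) < (m : ℕ)
  · obtain ⟨rfl, hlt⟩ := h
    exact (if_pos (show j = j ∧ (t : ℕ) < (m : ℕ) from ⟨rfl, hlt⟩)).trans
      (if_pos (show j = j ∧ m.rev < t.rev from ⟨rfl, Fin.rev_lt_rev.mpr hlt⟩)).symm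
  · exact (if_neg h).trans (if_neg (show ¬(i = j ∧ m.rev < t.rev) from
      fun hc => h ⟨hc.1.symm, Fin.rev_lt_rev.mp hc.2⟩)).symm

lemma rev_bigB : bigB T N.reciprocal (revScheme T N S)
    = ((bigD T N S)ᵀ).submatrix (tRev T N) id := by
  ext u κ
  obtain ⟨m, j, a⟩ := u
  obtain ⟨k, c⟩ := κ
  simp only [bigB, bigD, revScheme, GenNetwork.reciprocal, Matrix.submatrix_apply,
    Matrix.transpose_apply, tRev_apply, id]
  by_cases h : N.dst k = j
  · rfl
  · simp [h]

lemma rev_bigD : bigD T N.reciprocal (revScheme T N S)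
    = ((bigB T N S)ᵀ).submatrix id (tRev T N) := by
  ext κ u
  obtain ⟨k, c⟩ := κ
  obtain ⟨m, j, a⟩ := u
  simp only [bigB, bigD, revScheme, GenNetwork.reciprocal, Matrix.submatrix_apply,
    Matrix.transpose_apply, tRev_apply, id]
  by_cases h : N.src k = j
  · subst h; rfl
  · simp [h]
lemma pow_mul_comm_aux {ι : Type*} [Fintype ι] [DecidableEq ι]
    (G A : Matrix ι ι (ZMod p)) (i : ℕ) : (G * A) ^ i * G = G * (A * G) ^ i := by
  induction i with
  | zero => simp
  | succ i ih =>
    rw [pow_succ', mul_assoc, ih, pow_succ']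
    simp [mul_assoc]

lemma bigM_rev :
    bigM T N.reciprocal (revScheme T N S) = (bigM T N S)ᵀ := by
  have h1 : ∀ i : ℕ,
      ((bigA T N S)ᵀ.submatrix (tRev T N) (tRev T N) *
        (bigG T N)ᵀ.submatrix (tRev T N) (tRev T N)) ^ i
      = (((bigG T N * bigA T N S) ^ i)ᵀ).submatrix (tRev T N) (tRev T N) := by
    intro i
    rw [Matrix.submatrix_mul_equiv, ← Matrix.transpose_mul]
    induction i with
    | zero => simp [Matrix.submatrix_one_equiv]
    | succ i ih =>
      rw [pow_succ, ih, Matrix.submatrix_mul_equiv, ← Matrix.transpose_mul, ← pow_succ']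
  have hS' : bigS T N.reciprocal (revScheme T N S)
      = ((∑ i ∈ Finset.range T, (bigG T N * bigA T N S) ^ i)ᵀ).submatrix
          (tRev T N) (tRev T N) := by
    simp only [bigS, rev_bigA, rev_bigG]
    change (∑ i ∈ Finset.range T, ((bigA T N S)ᵀ.submatrix (tRev T N) (tRev T N) *
      (bigG T N)ᵀ.submatrix (tRev T N) (tRev T N)) ^ i : Matrix (Idx T N) (Idx T N) (ZMod p)) = _
    rw [Finset.sum_congr rfl fun i _ => h1 i]
    ext u v
    simp only [Matrix.sum_apply, Matrix.submatrix_apply, Matrix.transpose_apply]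
  have hcomm : (∑ i ∈ Finset.range T, (bigG T N * bigA T N S) ^ i) * bigG T N
      = bigG T N * ∑ i ∈ Finset.range T, (bigA T N S * bigG T N) ^ i := by
    rw [Finset.sum_mul, Finset.mul_sum]
    exact Finset.sum_congr rfl fun i _ => pow_mul_comm_aux _ _ i
  have htr : (bigG T N)ᵀ * (∑ i ∈ Finset.range T, (bigG T N * bigA T N S) ^ i)ᵀ
      = (∑ i ∈ Finset.range T, (bigA T N S * bigG T N) ^ i)ᵀ * (bigG T N)ᵀ := by
    rw [← Matrix.transpose_mul, ← Matrix.transpose_mul, hcomm]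
  simp only [bigM, rev_bigD, rev_bigG, hS', rev_bigB]
  change ((bigB T N S)ᵀ.submatrix id (tRev T N) * (bigG T N)ᵀ.submatrix (tRev T N) (tRev T N) *
    (∑ i ∈ Finset.range T, (bigG T N * bigA T N S) ^ i)ᵀ.submatrix (tRev T N) (tRev T N) *
    (bigD T N S)ᵀ.submatrix (tRev T N) id : Matrix (MIdx N) (MIdx N) (ZMod p)) = _
  rw [Matrix.submatrix_mul_equiv, Matrix.submatrix_mul_equiv, Matrix.submatrix_mul_equiv,
    Matrix.submatrix_id_id]
  simp only [bigS, Matrix.transpose_mul]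
  rw [Matrix.mul_assoc ((bigB T N S)ᵀ * (bigG T N)ᵀ), Matrix.mul_assoc ((bigB T N S)ᵀ),
    ← Matrix.mul_assoc ((bigG T N)ᵀ), htr, Matrix.mul_assoc]

end RecipAux

/-- **Linear reciprocity of linear deterministic networks.**  If a linear
deterministic network `N` with `n` unicast messages is solvable over `T` time
steps by a causal linear coding scheme, then so is its reciprocal network
`N′` (edges reversed, channel gain matrices transposed, sources and
destinations swapped). -/
theorem gen_linear_reciprocity [Fact p.Prime] {T : ℕ}
    (hq : 1 ≤ q) (hT : 1 ≤ T) (hn : 1 ≤ n) (hw : ∀ k, 1 ≤ N.w k)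
    (h : GLinearlySolvable T N) :
    GLinearlySolvable T N.reciprocal := by
  obtain ⟨S, hS⟩ := h
  refine ⟨RecipAux.revScheme T N S, ?_⟩
  rw [RecipAux.solves_iff, RecipAux.bigM_rev, RecipAux.solves_iff.mp hS,
    Matrix.transpose_one]
  rfl
end
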